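/- Every weak* null sequence in E''' = ((⊕_{n=1}^∞ ℓ_2^n)_{ℓ_∞})' converges uniformly to zero on the closed unit ball of E = (⊕_{n=1}^∞ ℓ_2^n)_{c_0}; that is, B_E is a limited subset of E''. -/

import Mathlib

open Filter Topology

noncomputable section

/-- The `n`-th block: the Euclidean lattice `ℓ₂^(n+1)` (so `n` ranges over all positive
dimensions). -/
abbrev Blk (n : ℕ) := EuclideanSpace ℝ (Fin (n + 1))

/-- Sequences of blocks; the ambient product in which `E`, `E'` and `E''` live. -/
abbrev PreE := ∀ n, Blk n

/-- The coordinatewise (lattice) order. -/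
def ele (x y : PreE) : Prop := ∀ n i, x n i ≤ y n i

/-- Membership in `E = (⊕ ℓ₂ⁿ)_{c₀}`: block norms tend to zero. -/
def memE0 (x : PreE) : Prop := Tendsto (fun n => ‖x n‖) atTop (𝓝 0)

/-- Membership in `E' = (⊕ ℓ₂ⁿ)_{ℓ₁}`: block norms are summable. -/
def memE1 (x : PreE) : Prop := Summable fun n => ‖x n‖

/-- The duality pairing `⟨f, x⟩ = Σₙ Σᵢ f n i * x n i`. -/
def pairE (f x : PreE) : ℝ := ∑' n, ∑ i, f n i * x n i

/-- `E'' = (⊕ ℓ₂ⁿ)_{ℓ_∞}`, the ℓ∞-sum, as a genuine Banach space. -/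
abbrev Epp := ↥(lp Blk ⊤)

/-- The diagonal unit vectors: `dg n` is `1` in the last coordinate of block `n`, `0` elsewhere. -/
def dg (n : ℕ) : PreE := fun m => if m = n then EuclideanSpace.single (Fin.last m) 1 else 0

/-- The third dual `E''' = (E'')'`: continuous linear functionals on `E'' = (⊕ ℓ₂ⁿ)_{ℓ∞}`. -/
abbrev Dppp := Epp →L[ℝ] ℝ

/-- Membership of an element of `E''` in (the canonical copy of) `E = (⊕ ℓ₂ⁿ)_{c₀}`. -/
def memEc (x : Epp) : Prop := Tendsto (fun n => ‖(x : PreE) n‖) atTop (𝓝 0)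

/-- `E^⊥ ⊆ E'''`: the functionals vanishing on `E`. -/
def inEperp (h : Dppp) : Prop := ∀ x : Epp, memEc x → h x = 0

/-- Positivity in `E''` (coordinatewise). -/
def epos (x : Epp) : Prop := ∀ n i, 0 ≤ (x : PreE) n i

/-- `|z| ≤ x` coordinatewise in `E''`. -/
def eabsLe (z x : Epp) : Prop := ∀ n i, |(z : PreE) n i| ≤ (x : PreE) n i

/-- The modulus of a functional `f ∈ E'''` evaluated at `x ≥ 0`: `|f|(x) = sup_{|z| ≤ x} f z`. -/
def modApp (f : Dppp) (x : Epp) : ℝ := sSup ((fun z => f z) '' {z | eabsLe z x})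

set_option linter.unusedSectionVars false

open scoped Classical

namespace S14

def ind (A : Set ℕ) (v : PreE) : PreE := fun n => if n ∈ A then v n else 0

lemma ind_norm_le (A : Set ℕ) (v : PreE) (n : ℕ) : ‖ind A v n‖ ≤ ‖v n‖ := by
  unfold ind; split
  · exact le_rfl
  · simp

lemma memℓp_ind (A : Set ℕ) (v : PreE) (hv : ∀ n, ‖v n‖ ≤ 1) : Memℓp (ind A v) ⊤ := by
  apply memℓp_infty
  refine ⟨1, ?_⟩
  rintro r ⟨n, rfl⟩
  exact (ind_norm_le A v n).trans (hv n)

def xel (A : Set ℕ) (v : PreE) (hv : ∀ n, ‖v n‖ ≤ 1) : Epp := ⟨ind A v, memℓp_ind A v hv⟩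

lemma xel_coe (A : Set ℕ) (v : PreE) (hv : ∀ n, ‖v n‖ ≤ 1) (n : ℕ) :
    (xel A v hv : PreE) n = if n ∈ A then v n else 0 := rfl

lemma xel_norm_le (A : Set ℕ) (v : PreE) (hv : ∀ n, ‖v n‖ ≤ 1) : ‖xel A v hv‖ ≤ 1 :=
  lp.norm_le_of_forall_le zero_le_one fun n => (ind_norm_le A v n).trans (hv n)

lemma xel_union (A B : Set ℕ) (v : PreE) (hv : ∀ n, ‖v n‖ ≤ 1) (h : ∀ n, ¬(n ∈ A ∧ n ∈ B)) :
    xel (A ∪ B) v hv = xel A v hv + xel B v hv := by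
  apply lp.ext
  funext n
  have : ((xel A v hv + xel B v hv : Epp) : PreE) n
      = (xel A v hv : PreE) n + (xel B v hv : PreE) n := rfl
  rw [this, xel_coe, xel_coe, xel_coe]
  by_cases hA : n ∈ A
  · have hB : n ∉ B := fun hB => h n ⟨hA, hB⟩
    simp [hA, hB]
  · by_cases hB : n ∈ B <;> simp [hA, hB]

end S14

namespace S14

def snglP (n : ℕ) (u : Blk n) : PreE := Function.update (0 : PreE) n u

lemma snglP_same (n : ℕ) (u : Blk n) : snglP n u n = u := Function.update_self n u 0

lemma snglP_ne (n : ℕ) (u : Blk n) {m : ℕ} (h : m ≠ n) : snglP n u m = 0 :=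
  Function.update_of_ne h u 0

lemma snglP_norm_le (n : ℕ) (u : Blk n) (m : ℕ) : ‖snglP n u m‖ ≤ ‖u‖ := by
  by_cases h : m = n
  · subst h; rw [snglP_same]
  · rw [snglP_ne n u h]; simp

lemma memℓp_snglP (n : ℕ) (u : Blk n) : Memℓp (snglP n u) ⊤ := by
  apply memℓp_infty
  refine ⟨‖u‖, ?_⟩
  rintro r ⟨m, rfl⟩
  exact snglP_norm_le n u m

def snglL (n : ℕ) : Blk n →ₗ[ℝ] Epp where
  toFun u := ⟨snglP n u, memℓp_snglP n u⟩
  map_add' u w := by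
    apply lp.ext; funext m
    have : ((⟨snglP n u, memℓp_snglP n u⟩ + ⟨snglP n w, memℓp_snglP n w⟩ : Epp) : PreE) m
        = snglP n u m + snglP n w m := rfl
    show snglP n (u + w) m = _
    rw [this]
    by_cases h : m = n
    · subst h; rw [snglP_same, snglP_same, snglP_same]
    · rw [snglP_ne n _ h, snglP_ne n _ h, snglP_ne n _ h, add_zero]
  map_smul' c u := by
    apply lp.ext; funext m
    have : ((c • (⟨snglP n u, memℓp_snglP n u⟩ : Epp) : Epp) : PreE) m = c • snglP n u m := rfl
    show snglP n (c • u) m = ((c • (⟨snglP n u, memℓp_snglP n u⟩ : Epp) : Epp) : PreE) m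
    rw [this]
    by_cases h : m = n
    · subst h; rw [snglP_same, snglP_same]
    · rw [snglP_ne n _ h, snglP_ne n _ h, smul_zero]

def sngl (n : ℕ) : Blk n →L[ℝ] Epp :=
  LinearMap.mkContinuous (snglL n) 1 (by
    intro u
    rw [one_mul]
    exact lp.norm_le_of_forall_le (norm_nonneg u) fun m => snglP_norm_le n u m)

lemma sngl_coe (n : ℕ) (u : Blk n) (m : ℕ) :
    ((sngl n u : Epp) : PreE) m = snglP n u m := rfl

/-- decomposition of an indicator element over a finset -/
lemma xel_finset (F : Finset ℕ) (v : PreE) (hv : ∀ n, ‖v n‖ ≤ 1) :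
    xel (↑F) v hv = ∑ n ∈ F, sngl n (v n) := by
  apply lp.ext; funext m
  have hsum : ((∑ n ∈ F, sngl n (v n) : Epp) : PreE) m = ∑ n ∈ F, ((sngl n (v n) : Epp) : PreE) m := by
    rw [lp.coeFn_sum]; exact Finset.sum_apply _ _ _
  rw [xel_coe, hsum]
  by_cases hm : m ∈ F
  · rw [if_pos (by exact_mod_cast hm)]
    rw [Finset.sum_eq_single_of_mem m hm]
    · rw [sngl_coe, snglP_same]
    · intro b _ hb
      rw [sngl_coe, snglP_ne _ _ (Ne.symm hb)]
  · rw [if_neg (by exact_mod_cast hm)]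
    symm
    apply Finset.sum_eq_zero
    intro b hb
    exact snglP_ne _ _ (by rintro rfl; exact hm hb)

end S14

namespace S14

/-- norming vector for a functional on a Euclidean block -/
lemma exists_norming (n : ℕ) (φ : Blk n →L[ℝ] ℝ) : ∃ u : Blk n, ‖u‖ ≤ 1 ∧ φ u = ‖φ‖ := by
  set w := (InnerProductSpace.toDual ℝ (Blk n)).symm φ with hw
  have hφ : ∀ u, φ u = inner ℝ w u := by
    intro u
    have : (InnerProductSpace.toDual ℝ (Blk n)) w = φ := by
      rw [hw]; exact (InnerProductSpace.toDual ℝ (Blk n)).apply_symm_apply φ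
    rw [← this]; rfl
  have hnw : ‖φ‖ = ‖w‖ := by
    rw [hw]; exact ((InnerProductSpace.toDual ℝ (Blk n)).symm.norm_map φ).symm
  by_cases h : w = 0
  · refine ⟨0, by simp, ?_⟩
    rw [hφ, hnw, h]; simp
  · refine ⟨‖w‖⁻¹ • w, ?_, ?_⟩
    · rw [norm_smul, norm_inv, norm_norm, inv_mul_cancel₀ (norm_ne_zero_iff.2 h)]
    · rw [hφ, hnw, inner_smul_right, real_inner_self_eq_norm_sq]
      have : ‖w‖ ≠ 0 := norm_ne_zero_iff.2 h
      field_simp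

/-- operator norms on a finite-dimensional block tend to zero if values do -/
lemma opnorm_tendsto_zero (n : ℕ) (φ : ℕ → Blk n →L[ℝ] ℝ)
    (h : ∀ u, Tendsto (fun k => φ k u) atTop (𝓝 0)) :
    Tendsto (fun k => ‖φ k‖) atTop (𝓝 0) := by
  have key : ∀ k, ‖φ k‖ ≤ ∑ i : Fin (n+1), |φ k (EuclideanSpace.single i 1)| := by
    intro k
    refine ContinuousLinearMap.opNorm_le_bound _ (by positivity) fun u => ?_
    have hu : u = ∑ i : Fin (n+1), u i • EuclideanSpace.single i (1:ℝ) := by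
      ext j
      rw [WithLp.ofLp_sum, Finset.sum_apply]
      rw [Finset.sum_eq_single_of_mem j (Finset.mem_univ j)]
      · rw [PiLp.smul_apply, EuclideanSpace.single_apply, if_pos rfl, smul_eq_mul, mul_one]
      · intro b _ hb
        rw [PiLp.smul_apply, EuclideanSpace.single_apply, if_neg (Ne.symm hb), smul_eq_mul,
          mul_zero]
    have hval : φ k u = ∑ i : Fin (n+1), u i * φ k (EuclideanSpace.single i 1) := by
      conv_lhs => rw [hu]
      rw [map_sum]
      exact Finset.sum_congr rfl fun i _ => by rw [map_smul, smul_eq_mul]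
    calc |φ k u| = |∑ i : Fin (n+1), u i * φ k (EuclideanSpace.single i 1)| := by rw [hval]
      _ ≤ ∑ i : Fin (n+1), |u i * φ k (EuclideanSpace.single i 1)| := Finset.abs_sum_le_sum_abs _ _
      _ ≤ (∑ i : Fin (n+1), |φ k (EuclideanSpace.single i 1)|) * ‖u‖ := by
          rw [Finset.sum_mul]
          refine Finset.sum_le_sum fun i _ => ?_
          rw [abs_mul, mul_comm]
          refine mul_le_mul_of_nonneg_left ?_ (abs_nonneg _)
          calc |u i| = ‖u i‖ := rfl
            _ ≤ ‖u‖ := by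
                have h2 : ‖u i‖^2 ≤ ∑ j : Fin (n+1), ‖u j‖^2 :=
                  Finset.single_le_sum (f := fun j => ‖u j‖^2) (fun j _ => by positivity)
                    (Finset.mem_univ i)
                calc ‖u i‖ = Real.sqrt (‖u i‖^2) := (Real.sqrt_sq (norm_nonneg _)).symm
                  _ ≤ Real.sqrt (∑ j : Fin (n+1), ‖u j‖^2) := Real.sqrt_le_sqrt h2
                  _ = ‖u‖ := (EuclideanSpace.norm_eq u).symm
  have hsum : Tendsto (fun k => ∑ i : Fin (n+1), |φ k (EuclideanSpace.single i 1)|) atTop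
      (𝓝 0) := by
    have := tendsto_finset_sum (f := fun i k => |φ k (EuclideanSpace.single i 1)|)
      Finset.univ (fun i _ => (h (EuclideanSpace.single i 1)).abs)
    simpa using this
  exact squeeze_zero (fun k => norm_nonneg _) key hsum

end S14

namespace S14

def blkF (f : Dppp) (n : ℕ) : Blk n →L[ℝ] ℝ := f.comp (sngl n)

def aN (f : Dppp) (n : ℕ) : ℝ := ‖blkF f n‖

lemma aN_nonneg (f : Dppp) (n : ℕ) : 0 ≤ aN f n := norm_nonneg _

/-- the norming vector for block n -/
def nv (f : Dppp) (n : ℕ) : Blk n := Classical.choose (exists_norming n (blkF f n))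

lemma nv_norm_le (f : Dppp) (n : ℕ) : ‖nv f n‖ ≤ 1 :=
  (Classical.choose_spec (exists_norming n (blkF f n))).1

lemma nv_spec (f : Dppp) (n : ℕ) : f (sngl n (nv f n)) = aN f n :=
  (Classical.choose_spec (exists_norming n (blkF f n))).2

lemma abs_apply_sngl_le (f : Dppp) (n : ℕ) (u : Blk n) (hu : ‖u‖ ≤ 1) :
    |f (sngl n u)| ≤ aN f n := by
  have : |blkF f n u| ≤ ‖blkF f n‖ * ‖u‖ := (blkF f n).le_opNorm u
  calc |f (sngl n u)| = |blkF f n u| := rfl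
    _ ≤ ‖blkF f n‖ * ‖u‖ := this
    _ ≤ aN f n * 1 := mul_le_mul_of_nonneg_left hu (norm_nonneg _)
    _ = aN f n := mul_one _

lemma sum_aN_le (f : Dppp) (F : Finset ℕ) : ∑ n ∈ F, aN f n ≤ ‖f‖ := by
  have hv : ∀ n, ‖nv f n‖ ≤ 1 := nv_norm_le f
  have h1 : ∑ n ∈ F, aN f n = f (xel (↑F) (nv f) hv) := by
    rw [xel_finset, map_sum]
    exact (Finset.sum_congr rfl fun n _ => (nv_spec f n).symm)
  rw [h1]
  calc f (xel (↑F) (nv f) hv) ≤ |f (xel (↑F) (nv f) hv)| := le_abs_self _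
    _ ≤ ‖f‖ * ‖xel (↑F) (nv f) hv‖ := f.le_opNorm _
    _ ≤ ‖f‖ * 1 := mul_le_mul_of_nonneg_left (xel_norm_le _ _ _) (norm_nonneg _)
    _ = ‖f‖ := mul_one _

lemma summable_aN (f : Dppp) : Summable (aN f) :=
  summable_of_sum_le (fun n => aN_nonneg f n) (sum_aN_le f)

def SN (f : Dppp) : ℝ := ∑' n, aN f n

lemma SN_nonneg (f : Dppp) : 0 ≤ SN f := tsum_nonneg (aN_nonneg f)

lemma sum_le_SN (f : Dppp) (F : Finset ℕ) : ∑ n ∈ F, aN f n ≤ SN f :=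
  Summable.sum_le_tsum F (fun n _ => aN_nonneg f n) (summable_aN f)

lemma abs_apply_le_SN (f : Dppp) (x : Epp) (hx : memEc x) (hx1 : ‖x‖ ≤ 1) : |f x| ≤ SN f := by
  have hv : ∀ n, ‖(x : PreE) n‖ ≤ 1 := fun n =>
    (lp.norm_apply_le_norm ENNReal.top_ne_zero x n).trans hx1
  set xF : ℕ → Epp := fun N => xel (↑(Finset.range N)) (x : PreE) hv with hxF
  have hlim : Tendsto xF atTop (𝓝 x) := by
    rw [Metric.tendsto_atTop]
    intro ε hε
    have hx2 : Tendsto (fun n => ‖(x : PreE) n‖) atTop (𝓝 0) := hx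
    rw [Metric.tendsto_atTop] at hx2
    obtain ⟨N₀, hN₀⟩ := hx2 (ε/2) (by positivity)
    refine ⟨N₀, fun N hN => ?_⟩
    rw [dist_eq_norm]
    have hco : ∀ n, ‖((xF N - x : Epp) : PreE) n‖ ≤ ε/2 := by
      intro n
      have : ((xF N - x : Epp) : PreE) n = (xF N : PreE) n - (x : PreE) n := rfl
      rw [this, hxF, xel_coe]
      by_cases h : n ∈ (↑(Finset.range N) : Set ℕ)
      · rw [if_pos h, sub_self, norm_zero]; positivity
      · rw [if_neg h, zero_sub, norm_neg]
        have hn : N₀ ≤ n := by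
          simp only [Finset.coe_range, Set.mem_Iio, not_lt] at h
          exact hN.trans h
        have := hN₀ n hn
        rw [Real.dist_eq, sub_zero, abs_of_nonneg (norm_nonneg _)] at this
        exact this.le
    calc ‖xF N - x‖ ≤ ε/2 := lp.norm_le_of_forall_le (by positivity) hco
      _ < ε := by linarith
  have hbd : ∀ N, |f (xF N)| ≤ SN f := by
    intro N
    rw [hxF]
    simp only
    rw [xel_finset, map_sum]
    calc |∑ n ∈ Finset.range N, f (sngl n ((x : PreE) n))|
        ≤ ∑ n ∈ Finset.range N, |f (sngl n ((x : PreE) n))| := Finset.abs_sum_le_sum_abs _ _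
      _ ≤ ∑ n ∈ Finset.range N, aN f n :=
          Finset.sum_le_sum fun n _ => abs_apply_sngl_le f n _ (hv n)
      _ ≤ SN f := sum_le_SN f _
  have hfl : Tendsto (fun N => |f (xF N)|) atTop (𝓝 |f x|) :=
    ((f.continuous.tendsto x).comp hlim).abs
  exact le_of_tendsto hfl (Filter.Eventually.of_forall hbd)

end S14

namespace S14

section WOf

variable (m : Set ℕ → ℝ) (C : ℝ)

def wOf (B : Set ℕ) : ℝ := sSup ((fun B' => |m B'|) '' {B' | B' ⊆ B})

variable (hbd : ∀ A, |m A| ≤ C)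

include hbd

lemma wOf_bddAbove (B : Set ℕ) : BddAbove ((fun B' => |m B'|) '' {B' | B' ⊆ B}) := by
  refine ⟨C, ?_⟩
  rintro t ⟨B', _, rfl⟩
  exact hbd B'

lemma le_wOf {B' B : Set ℕ} (h : B' ⊆ B) : |m B'| ≤ wOf m B :=
  le_csSup (wOf_bddAbove m C hbd B) ⟨B', h, rfl⟩

lemma wOf_nonneg (B : Set ℕ) : 0 ≤ wOf m B :=
  (abs_nonneg (m ∅)).trans (le_wOf m C hbd (Set.empty_subset B))

lemma wOf_le_C (B : Set ℕ) : wOf m B ≤ C :=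
  csSup_le ⟨|m ∅|, ⟨∅, Set.empty_subset B, rfl⟩⟩ (by rintro t ⟨B', _, rfl⟩; exact hbd B')

lemma wOf_mono {B B' : Set ℕ} (h : B ⊆ B') : wOf m B ≤ wOf m B' :=
  csSup_le ⟨|m ∅|, ⟨∅, Set.empty_subset B, rfl⟩⟩
    (by rintro t ⟨B'', hB'', rfl⟩; exact le_wOf m C hbd (hB''.trans h))

variable (hadd : ∀ A B : Set ℕ, Disjoint A B → m (A ∪ B) = m A + m B)

include hadd

lemma m_biUnion {ι : Type*} [DecidableEq ι] (s : Finset ι) (B : ι → Set ℕ)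
    (hdis : ∀ p ∈ s, ∀ q ∈ s, p ≠ q → Disjoint (B p) (B q)) :
    m (⋃ p ∈ s, B p) = ∑ p ∈ s, m (B p) := by
  classical
  have hempty : m ∅ = 0 := by
    have := hadd ∅ ∅ (by simp)
    simpa using this
  induction s using Finset.induction_on with
  | empty => simpa using hempty
  | @insert a s ha ih =>
    rw [Finset.set_biUnion_insert, Finset.sum_insert ha,
      hadd _ _ ?_, ih ?_]
    · intro p hp q hq hpq
      exact hdis p (Finset.mem_insert_of_mem hp) q (Finset.mem_insert_of_mem hq) hpq
    · rw [Set.disjoint_iUnion₂_right]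
      intro p hp
      exact hdis a (Finset.mem_insert_self a s) p (Finset.mem_insert_of_mem hp)
        (by rintro rfl; exact ha hp)

end WOf

end S14

namespace S14

lemma wOf_sum_le (m : Set ℕ → ℝ) (C : ℝ) (hbd : ∀ A, |m A| ≤ C)
    (hadd : ∀ A B : Set ℕ, Disjoint A B → m (A ∪ B) = m A + m B)
    (t : ℕ) (B : Fin t → Set ℕ) (hdis : ∀ p q, p ≠ q → Disjoint (B p) (B q)) :
    ∑ p, wOf m (B p) ≤ 2 * C := by
  classical
  refine le_of_forall_pos_le_add fun η hη => ?_
  have hex : ∀ p : Fin t, ∃ B' : Set ℕ, B' ⊆ B p ∧ wOf m (B p) ≤ |m B'| + η / (t + 1) := by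
    intro p
    have hpos : 0 < η / (t + 1) := by positivity
    have hlt : wOf m (B p) - η / (t+1) < wOf m (B p) := by linarith
    have hne : ((fun B' => |m B'|) '' {B' : Set ℕ | B' ⊆ B p}).Nonempty :=
      ⟨|m ∅|, ⟨∅, Set.empty_subset _, rfl⟩⟩
    obtain ⟨y, hymem, hy⟩ := exists_lt_of_lt_csSup hne
      (show wOf m (B p) - η/(t+1) < sSup ((fun B' => |m B'|) '' {B' : Set ℕ | B' ⊆ B p}) from hlt)
    obtain ⟨B', hB', rfl⟩ := hymem
    exact ⟨B', hB', by linarith⟩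
  choose B' hB'sub hB'w using hex
  have hdis' : ∀ p q : Fin t, p ≠ q → Disjoint (B' p) (B' q) := fun p q hpq =>
    ((hdis p q hpq).mono (hB'sub p) (hB'sub q))
  have habs : ∑ p, |m (B' p)| ≤ 2 * C := by
    set P : Finset (Fin t) := Finset.univ.filter fun p => 0 ≤ m (B' p) with hP
    have h1 : ∑ p ∈ P, |m (B' p)| = m (⋃ p ∈ P, B' p) := by
      rw [m_biUnion m C hbd hadd P B' fun p _ q _ hpq => hdis' p q hpq]
      refine Finset.sum_congr rfl fun p hp => ?_
      rw [hP] at hp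
      exact abs_of_nonneg (Finset.mem_filter.1 hp).2
    have h2 : ∑ p ∈ Pᶜ, |m (B' p)| = -m (⋃ p ∈ Pᶜ, B' p) := by
      rw [m_biUnion m C hbd hadd Pᶜ B' fun p _ q _ hpq => hdis' p q hpq, ← Finset.sum_neg_distrib]
      refine Finset.sum_congr rfl fun p hp => ?_
      rw [Finset.mem_compl, hP, Finset.mem_filter] at hp
      push_neg at hp
      exact abs_of_neg (hp (Finset.mem_univ p))
    calc ∑ p, |m (B' p)| = ∑ p ∈ P, |m (B' p)| + ∑ p ∈ Pᶜ, |m (B' p)| :=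
          (Finset.sum_add_sum_compl P _).symm
      _ = m (⋃ p ∈ P, B' p) + -m (⋃ p ∈ Pᶜ, B' p) := by rw [h1, h2]
      _ ≤ C + C := add_le_add (le_trans (le_abs_self _) (hbd _))
          ((neg_le_abs _).trans (hbd _))
      _ = 2 * C := by ring
  calc ∑ p, wOf m (B p) ≤ ∑ p : Fin t, (|m (B' p)| + η / (t+1)) := Finset.sum_le_sum fun p _ => hB'w p
    _ = (∑ p, |m (B' p)|) + t * (η / (t+1)) := by
        rw [Finset.sum_add_distrib, Finset.sum_const, Finset.card_univ, Fintype.card_fin,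
          nsmul_eq_mul]
    _ ≤ 2 * C + η := by
        have h3 : (t : ℝ) * (η / (t+1)) ≤ η := by
          rw [mul_div_assoc']
          rw [div_le_iff₀ (by positivity)]
          nlinarith [hη.le]
        linarith
end S14

namespace S14

/-- Rosenthal's lemma for monotone set functions with bounded sums over disjoint families. -/
lemma rosenthal (w : ℕ → Set ℕ → ℝ) (K δ : ℝ) (hδ : 0 < δ)
    (mono : ∀ r (B B' : Set ℕ), B ⊆ B' → w r B ≤ w r B')
    (hsum : ∀ r (t : ℕ) (B : Fin t → Set ℕ), (∀ p q, p ≠ q → Disjoint (B p) (B q)) →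
      ∑ p, w r (B p) ≤ K) :
    ∃ M : Set ℕ, M.Infinite ∧ ∀ r ∈ M, w r (M \ {r}) ≤ δ := by
  classical
  by_contra hgoal
  push_neg at hgoal
  -- invariant structure
  set P : ℕ → Prop := fun t => ∃ (o : ℕ → ℕ) (S : ℕ → Set ℕ) (L : ℕ → Fin t → Set ℕ),
    (∀ α, o α ∈ S α) ∧
    (∀ α β, α ≠ β → Disjoint (S α) (S β)) ∧
    (∀ α (p q : Fin t), p ≠ q → Disjoint (L α p) (L α q)) ∧
    (∀ α (p : Fin t) β, Disjoint (L α p) (S β)) ∧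
    (∀ α (p : Fin t), δ < w (o α) (L α p)) with hPdef
  have hbase : P 0 := by
    refine ⟨id, fun α => {α}, fun _ => Fin.elim0, fun α => rfl, ?_, ?_, ?_, ?_⟩
    · intro α β h
      simpa [Set.disjoint_singleton_left] using h
    · intro α p; exact p.elim0
    · intro α p; exact p.elim0
    · intro α p; exact p.elim0
  have hstep : ∀ t, P t → P (t + 1) := by
    intro t ⟨o, S, L, hoS, hSd, hLd, hLS, hLw⟩
    -- partition ℕ into infinitely many infinite blocks
    set e : ℕ × ℕ ≃ ℕ := Nat.pairEquiv with he
    set Nb : ℕ → Set ℕ := fun p => Set.range fun q => e (p, q) with hNb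
    have hNbinf : ∀ p, (Nb p).Infinite :=
      fun p => Set.infinite_range_of_injective (fun q q' h => by
        simpa using (e.injective h))
    have hNbdis : ∀ p q, p ≠ q → Disjoint (Nb p) (Nb q) := by
      intro p q hpq
      rw [Set.disjoint_left]
      rintro x ⟨a, rfl⟩ ⟨b, hb⟩
      exact hpq (congrArg Prod.fst (e.injective hb)).symm
    have hoinj : Function.Injective o := by
      intro α β h
      by_contra hne
      exact Set.disjoint_left.1 (hSd α β hne) (hoS α) (h ▸ hoS β)
    by_cases hcase : ∃ p, ∀ α ∈ Nb p, w (o α) (⋃ β ∈ Nb p \ {α}, S β) ≤ δ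
    · -- the goal holds: contradiction with hgoal
      exfalso
      obtain ⟨p, hp⟩ := hcase
      set M : Set ℕ := o '' Nb p with hM
      have hMinf : M.Infinite := (hNbinf p).image (hoinj.injOn)
      obtain ⟨r, hrM, hrw⟩ := hgoal M hMinf
      obtain ⟨α, hα, rfl⟩ := hrM
      have hsub : M \ {o α} ⊆ ⋃ β ∈ Nb p \ {α}, S β := by
        rintro x ⟨⟨β, hβ, rfl⟩, hx2⟩
        have hβα : β ≠ α := by
          rintro rfl; exact hx2 rfl
        exact Set.mem_biUnion ⟨hβ, hβα⟩ (hoS β)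
      exact absurd ((mono _ _ _ hsub).trans (hp α hα)) (not_le.2 hrw)
    · push_neg at hcase
      choose αf hαmem hαw using hcase
      have hαinj : ∀ p q, p ≠ q → αf p ≠ αf q := by
        intro p q hpq h
        exact Set.disjoint_left.1 (hNbdis p q hpq) (hαmem p) (h ▸ hαmem q)
      refine ⟨fun p => o (αf p), fun p => S (αf p),
        fun p => Fin.snoc (L (αf p)) (⋃ β ∈ Nb p \ {αf p}, S β), ?_, ?_, ?_, ?_, ?_⟩
      · intro p; exact hoS _
      · intro p q h; exact hSd _ _ (hαinj p q h)
      · intro p i j hij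
        have hDS : ∀ β, Disjoint (⋃ γ ∈ Nb p \ {αf p}, S γ) (S β) ∨ True := fun _ => Or.inr trivial
        induction i using Fin.lastCases with
        | last =>
          induction j using Fin.lastCases with
          | last => exact absurd rfl hij
          | cast j' =>
            simp only [Fin.snoc_last, Fin.snoc_castSucc]
            rw [Set.disjoint_iUnion_left]
            intro β
            rw [Set.disjoint_iUnion_left]
            intro _
            exact (hLS (αf p) j' β).symm
        | cast i' =>
          induction j using Fin.lastCases with
          | last =>
            simp only [Fin.snoc_last, Fin.snoc_castSucc]
            rw [Set.disjoint_iUnion_right]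
            intro β
            rw [Set.disjoint_iUnion_right]
            intro _
            exact hLS (αf p) i' β
          | cast j' =>
            simp only [Fin.snoc_castSucc]
            exact hLd (αf p) i' j' (by simpa using hij)
      · intro p i β
        induction i using Fin.lastCases with
        | last =>
          simp only [Fin.snoc_last]
          rw [Set.disjoint_iUnion_left]
          intro γ
          rw [Set.disjoint_iUnion_left]
          rintro ⟨hγ1, hγ2⟩
          refine hSd γ (αf β) fun h => ?_
          by_cases hbp : β = p
          · subst hbp; exact hγ2 (by simp [h])
          · exact Set.disjoint_left.1 (hNbdis p β fun hh => hbp hh.symm) hγ1 (h ▸ hαmem β)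
        | cast i' =>
          simp only [Fin.snoc_castSucc]
          exact hLS (αf p) i' (αf β)
      · intro p i
        induction i using Fin.lastCases with
        | last => simp only [Fin.snoc_last]; exact hαw p
        | cast i' => simp only [Fin.snoc_castSucc]; exact hLw (αf p) i'
  have hall : ∀ t, P t := fun t => Nat.rec hbase (fun t ih => hstep t ih) t
  -- quantitative contradiction
  obtain ⟨n, hn⟩ := exists_nat_gt (K / δ)
  obtain ⟨o, S, L, hoS, hSd, hLd, hLS, hLw⟩ := hall n
  have h1 : (n : ℝ) * δ ≤ K := by
    have h2 : ∑ p : Fin n, δ ≤ ∑ p : Fin n, w (o 0) (L 0 p) :=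
      Finset.sum_le_sum fun p _ => (hLw 0 p).le
    have h3 := hsum (o 0) n (L 0) (fun p q h => hLd 0 p q h)
    rw [Finset.sum_const, Finset.card_univ, Fintype.card_fin, nsmul_eq_mul] at h2
    linarith
  have h4 : K < n * δ := by
    rw [div_lt_iff₀ hδ] at hn
    linarith
  linarith

end S14

namespace S14

lemma SN_tendsto (f : ℕ → Dppp) (hw : ∀ x : Epp, Tendsto (fun k => f k x) atTop (𝓝 0)) :
    Tendsto (fun k => SN (f k)) atTop (𝓝 0) := by
  classical
  by_contra hcon
  -- uniform bound via Banach–Steinhaus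
  obtain ⟨C, hC⟩ : ∃ C, ∀ k, ‖f k‖ ≤ C := by
    apply banach_steinhaus
    intro x
    have hb : BddAbove (Set.range fun k => ‖f k x‖) := ((hw x).norm).bddAbove_range
    obtain ⟨c, hc⟩ := hb
    exact ⟨c, fun k => hc ⟨k, rfl⟩⟩
  have hC0 : 0 ≤ C := (norm_nonneg (f 0)).trans (hC 0)
  -- extract ε and subsequence
  obtain ⟨ε, hε, hfreq⟩ : ∃ ε > 0, ∃ᶠ k in atTop, ε ≤ SN (f k) := by
    by_contra h
    push_neg at h
    apply hcon
    rw [Metric.tendsto_atTop]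
    intro ε' hε'
    have h2 := h (ε'/2) (by positivity)
    obtain ⟨K₀, hK₀⟩ := Filter.eventually_atTop.1 h2
    refine ⟨K₀, fun k hk => ?_⟩
    have := hK₀ k hk
    rw [Real.dist_eq, sub_zero, abs_of_nonneg (SN_nonneg _)]
    linarith
  obtain ⟨ψ, hψmono, hψ⟩ := Filter.extraction_of_frequently_atTop hfreq
  set g : ℕ → Dppp := fun j => f (ψ j) with hg
  have hgw : ∀ x : Epp, Tendsto (fun j => g j x) atTop (𝓝 0) :=
    fun x => (hw x).comp hψmono.tendsto_atTop
  have hgC : ∀ j, ‖g j‖ ≤ C := fun j => hC (ψ j)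
  have hgS : ∀ j, ε ≤ SN (g j) := fun j => hψ j
  have haN : ∀ n, Tendsto (fun j => aN (g j) n) atTop (𝓝 0) :=
    fun n => opnorm_tendsto_zero n (fun j => blkF (g j) n) (fun u => hgw (sngl n u))
  have hhead0 : ∀ Np : ℕ,
      Tendsto (fun j => ∑ n ∈ Finset.range Np, aN (g j) n) atTop (𝓝 0) := by
    intro Np
    have := tendsto_finset_sum (f := fun n j => aN (g j) n) (Finset.range Np) fun n _ => haN n
    simpa using this
  -- the gliding hump step
  have hstep : ∀ jp Np : ℕ, ∃ j N', jp < j ∧ Np < N' ∧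
      (∑ n ∈ Finset.range Np, aN (g j) n ≤ ε/8) ∧
      (SN (g j) - ∑ n ∈ Finset.range N', aN (g j) n ≤ ε/8) := by
    intro jp Np
    have h1 := Metric.tendsto_atTop.1 (hhead0 Np) (ε/8) (by positivity)
    obtain ⟨J₀, hJ₀⟩ := h1
    set j := max (jp + 1) J₀ with hj
    have hhead : ∑ n ∈ Finset.range Np, aN (g j) n ≤ ε/8 := by
      have := hJ₀ j (le_max_right _ _)
      rw [Real.dist_eq, sub_zero,
        abs_of_nonneg (Finset.sum_nonneg fun n _ => aN_nonneg _ n)] at this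
      linarith
    have h2 : Tendsto (fun N' => ∑ n ∈ Finset.range N', aN (g j) n) atTop (𝓝 (SN (g j))) :=
      (summable_aN (g j)).hasSum.tendsto_sum_nat
    have h3 := Metric.tendsto_atTop.1 h2 (ε/8) (by positivity)
    obtain ⟨N₁, hN₁⟩ := h3
    set N' := max (Np + 1) N₁ with hN'
    refine ⟨j, N', lt_of_lt_of_le (Nat.lt_succ_self jp) (le_max_left _ _),
      lt_of_lt_of_le (Nat.lt_succ_self Np) (le_max_left _ _), hhead, ?_⟩
    have := hN₁ N' (le_max_right _ _)
    rw [Real.dist_eq, abs_sub_lt_iff] at this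
    linarith [this.2]
  choose jf Nf hjf hNf hheadf htailf using hstep
  -- recursive construction of J and N
  set G : ℕ → ℕ × ℕ :=
    fun r => Nat.rec (jf 0 0, Nf 0 0) (fun _ p => (jf p.1 p.2, Nf p.1 p.2)) r with hGdef
  set J : ℕ → ℕ := fun r => (G r).1 with hJdef
  set N : ℕ → ℕ := fun r => Nat.rec 0 (fun r' _ => (G r').2) r with hNdef
  have hN0 : N 0 = 0 := rfl
  have hNsucc : ∀ r, N (r + 1) = (G r).2 := fun r => rfl
  have hGsucc : ∀ r, G (r + 1) = (jf (G r).1 (G r).2, Nf (G r).1 (G r).2) := fun r => rfl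
  have hNlt : ∀ r, N r < N (r + 1) := by
    intro r
    cases r with
    | zero => exact hNf 0 0
    | succ r' => exact hNf (G r').1 (G r').2
  have hNmono : StrictMono N := strictMono_nat_of_lt_succ hNlt
  have hJlt : ∀ r, J r < J (r + 1) := fun r => hjf (G r).1 (G r).2
  have hJmono : StrictMono J := strictMono_nat_of_lt_succ hJlt
  have hhead' : ∀ r, ∑ n ∈ Finset.range (N r), aN (g (J r)) n ≤ ε/8 := by
    intro r
    cases r with
    | zero =>
      have h0 : N 0 = 0 := rfl
      rw [h0]
      simp only [Finset.range_zero, Finset.sum_empty]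
      positivity
    | succ r' => exact hheadf (G r').1 (G r').2
  have htail' : ∀ r, SN (g (J r)) - ∑ n ∈ Finset.range (N (r + 1)), aN (g (J r)) n ≤ ε/8 := by
    intro r
    cases r with
    | zero => exact htailf 0 0
    | succ r' => exact htailf (G r').1 (G r').2
  have hump : ∀ r, 3*ε/4 ≤ ∑ n ∈ Finset.Ico (N r) (N (r + 1)), aN (g (J r)) n := by
    intro r
    have hsplit : ∑ n ∈ Finset.range (N r), aN (g (J r)) n
        + ∑ n ∈ Finset.Ico (N r) (N (r+1)), aN (g (J r)) n
        = ∑ n ∈ Finset.range (N (r+1)), aN (g (J r)) n := by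
      rw [Finset.range_eq_Ico, Finset.range_eq_Ico]
      exact Finset.sum_Ico_consecutive _ (Nat.zero_le _) (hNlt r).le
    have h1 := hhead' r
    have h2 := htail' r
    have h3 := hgS (J r)
    linarith
  -- the block index function ρ
  have hNex : ∀ n, ∃ r, n < N (r + 1) :=
    fun n => ⟨n, lt_of_lt_of_le (Nat.lt_succ_self n) (hNmono.le_apply)⟩
  set ρ : ℕ → ℕ := fun n => Nat.find (hNex n) with hρdef
  have hρ1 : ∀ n, n < N (ρ n + 1) := fun n => Nat.find_spec (hNex n)
  have hρ2 : ∀ n, N (ρ n) ≤ n := by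
    intro n
    rcases Nat.eq_zero_or_pos (ρ n) with h | h
    · rw [h, hN0]; exact Nat.zero_le n
    · obtain ⟨r', hr'⟩ := Nat.exists_eq_succ_of_ne_zero h.ne'
      have := Nat.find_min (hNex n) (show r' < ρ n by omega)
      push_neg at this
      rw [hr']
      exact this
  have hρIco : ∀ r n, N r ≤ n → n < N (r + 1) → ρ n = r := by
    intro r n h1 h2
    by_contra hne
    rcases lt_or_gt_of_ne hne with h | h
    · have h3 : N (ρ n + 1) ≤ N r := hNmono.monotone (Nat.succ_le_of_lt h)
      have h4 := hρ1 n
      omega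
    · have h3 : N (r + 1) ≤ N (ρ n) := hNmono.monotone (Nat.succ_le_of_lt h)
      have h4 := hρ2 n
      omega
  -- the fixed choice of vectors
  set v : PreE := fun n => nv (g (J (ρ n))) n with hvdef
  have hv : ∀ n, ‖v n‖ ≤ 1 := fun n => nv_norm_le _ n
  -- the finitely additive pre-measures
  set mfun : ℕ → Set ℕ → ℝ := fun r B => g (J r) (xel {n | ρ n ∈ B} v hv) with hmdef
  have hm_add : ∀ r (A B : Set ℕ), Disjoint A B → mfun r (A ∪ B) = mfun r A + mfun r B := by
    intro r A B hAB
    have hset : {n | ρ n ∈ A ∪ B} = {n | ρ n ∈ A} ∪ {n | ρ n ∈ B} := by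
      ext n; simp [Set.mem_union]
    have hdis : ∀ n, ¬(n ∈ {n | ρ n ∈ A} ∧ n ∈ {n | ρ n ∈ B}) := by
      intro n ⟨h1, h2⟩
      exact Set.disjoint_left.1 hAB h1 h2
    rw [hmdef]
    simp only
    rw [hset, xel_union _ _ _ _ hdis, map_add]
  have hm_bd : ∀ r (B : Set ℕ), |mfun r B| ≤ C := by
    intro r B
    calc |mfun r B| ≤ ‖g (J r)‖ * ‖xel {n | ρ n ∈ B} v hv‖ := (g (J r)).le_opNorm _
      _ ≤ C * 1 := mul_le_mul (hgC _) (xel_norm_le _ _ _) (norm_nonneg _) hC0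
      _ = C := mul_one _
  have hm_self : ∀ r, 3*ε/4 ≤ mfun r {r} := by
    intro r
    have hset : {n | ρ n ∈ ({r} : Set ℕ)} = ↑(Finset.Ico (N r) (N (r + 1))) := by
      ext n
      simp only [Set.mem_setOf_eq, Set.mem_singleton_iff, Finset.coe_Ico, Set.mem_Ico]
      constructor
      · rintro rfl; exact ⟨hρ2 n, hρ1 n⟩
      · rintro ⟨h1, h2⟩; exact hρIco r n h1 h2
    have : mfun r {r} = ∑ n ∈ Finset.Ico (N r) (N (r + 1)), aN (g (J r)) n := by
      rw [hmdef]
      simp only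
      rw [hset, xel_finset, map_sum]
      refine Finset.sum_congr rfl fun n hn => ?_
      rw [Finset.mem_Ico] at hn
      have hr : ρ n = r := hρIco r n hn.1 hn.2
      rw [hvdef]
      simp only
      rw [hr]
      exact nv_spec (g (J r)) n
    rw [this]
    exact hump r
  have hm_dec : ∀ B : Set ℕ, Tendsto (fun r => mfun r B) atTop (𝓝 0) := by
    intro B
    have : (fun r => mfun r B) = fun r => f (ψ (J r)) (xel {n | ρ n ∈ B} v hv) := rfl
    rw [this]
    exact (hw _).comp (hψmono.comp hJmono).tendsto_atTop
  -- Rosenthal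
  obtain ⟨M, hMinf, hM⟩ := rosenthal (fun r => wOf (mfun r)) (2*C) (ε/4) (by positivity)
    (fun r B B' h => wOf_mono (mfun r) C (hm_bd r) h)
    (fun r t B hdis => wOf_sum_le (mfun r) C (hm_bd r) (hm_add r) t B hdis)
  -- final contradiction
  have hbig : ∀ r ∈ M, ε/2 ≤ mfun r M := by
    intro r hr
    have hsplit : mfun r M = mfun r {r} + mfun r (M \ {r}) := by
      have hu : ({r} : Set ℕ) ∪ (M \ {r}) = M := by
        rw [Set.singleton_union, Set.insert_diff_singleton, Set.insert_eq_self.2 hr]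
      have h0 := hm_add r {r} (M \ {r}) (Set.disjoint_left.2 fun x hx1 hx2 => hx2.2 hx1)
      rw [hu] at h0
      exact h0
    have h1 : |mfun r (M \ {r})| ≤ ε/4 :=
      (le_wOf (mfun r) C (hm_bd r) (subset_refl _)).trans (hM r hr)
    have h2 := hm_self r
    have h3 : -(ε/4) ≤ mfun r (M \ {r}) := neg_le_of_abs_le h1 |>.trans_eq rfl
    rw [hsplit]
    have := abs_le.1 h1
    linarith [this.1]
  obtain ⟨R, hR⟩ := Filter.eventually_atTop.1 ((hm_dec M).eventually
    (eventually_abs_sub_lt 0 (show (0:ℝ) < ε/2 by positivity)))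
  obtain ⟨r, hrM, hrR⟩ := hMinf.exists_gt R
  have := hR r hrR.le
  rw [sub_zero] at this
  have := hbig r hrM
  have habs : |mfun r M| < ε/2 := by
    have := hR r hrR.le
    rwa [sub_zero] at this
  linarith [(le_abs_self (mfun r M)).trans_lt habs]

end S14


/-- Every weak* null sequence in `E''' = ((⊕ ℓ₂ⁿ)_{ℓ∞})'` converges uniformly to zero on the
closed unit ball of `E = (⊕ ℓ₂ⁿ)_{c₀}`; i.e. `B_E` is a limited subset of `E''`. -/
theorem stmt_14 (f : ℕ → Dppp) (hwstar : ∀ x : Epp, Tendsto (fun k => f k x) atTop (𝓝 0)) :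
    Tendsto (fun k => sSup ((fun x => |f k x|) '' {x : Epp | memEc x ∧ ‖x‖ ≤ 1}))
      atTop (𝓝 0) := by
  have hS := S14.SN_tendsto f hwstar
  apply squeeze_zero ?_ ?_ hS
  · intro k
    apply Real.sSup_nonneg
    rintro t ⟨x, _, rfl⟩
    exact abs_nonneg _
  · intro k
    apply Real.sSup_le ?_ (S14.SN_nonneg (f k))
    rintro t ⟨x, ⟨hx1, hx2⟩, rfl⟩
    exact S14.abs_apply_le_SN (f k) x hx1 hx2
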